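/- (Example I bound for a triangle factor graph.) Let X_i, X_j, X_k be finite nonempty types and let ψ_J : X_i × X_j → ℝ, ψ_K : X_i × X_k → ℝ, ψ_L : X_j × X_k → ℝ be nonnegative. Assume: for every x_j, ∑_{x_i} ψ_J(x_i, x_j) > 0; for every x_k, ∑_{x_i} ψ_K(x_i, x_k) > 0; and ∑_{x_i, x_j, x_k} ψ_J(x_i,x_j) ψ_K(x_i,x_k) ψ_L(x_j,x_k) > 0. Define l_J(x_i) := min_{x_j} ψ_J(x_i,x_j) / ∑_{x'_i} ψ_J(x'_i,x_j) and u_J(x_i) := max_{x_j} ψ_J(x_i,x_j) / ∑_{x'_i} ψ_J(x'_i,x_j), and similarly l_K, u_K from ψ_K with x_k in place of x_j. Let P : X_i → ℝ be the normalization of x_i ↦ ∑_{x_j, x_k} ψ_J(x_i,x_j) ψ_K(x_i,x_k) ψ_L(x_j,x_k). Then for every x_i ∈ X_i, P(x_i) lies between the infimum and the supremum of N(f·g)(x_i) over all pairs of functions f, g : X_i → ℝ with l_J ≤ f ≤ u_J and l_K ≤ g ≤ u_K pointwise and f·g nonzero, where f·g is the pointwise product and N denotes normalization. -/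

import Mathlib

lemma aux_convex_bounds {ι : Type*} [Fintype ι] (S : Set ℝ) (hne : S.Nonempty)
    (hlb : ∀ r ∈ S, (0:ℝ) ≤ r) (hub : ∀ r ∈ S, r ≤ 1)
    (μ n : ι → ℝ) (hμ0 : ∀ p, 0 ≤ μ p) (hμ1 : ∑ p, μ p = 1)
    (hmem : ∀ p, μ p ≠ 0 → n p ∈ S) :
    sInf S ≤ ∑ p, μ p * n p ∧ ∑ p, μ p * n p ≤ sSup S := by
  have hbb : BddBelow S := ⟨0, hlb⟩
  have hba : BddAbove S := ⟨1, hub⟩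
  constructor
  · calc sInf S = ∑ p, μ p * sInf S := by rw [← Finset.sum_mul, hμ1, one_mul]
      _ ≤ ∑ p, μ p * n p := by
          apply Finset.sum_le_sum
          intro p _
          rcases eq_or_ne (μ p) 0 with h | h
          · simp [h]
          · exact mul_le_mul_of_nonneg_left (csInf_le hbb (hmem p h)) (hμ0 p)
  · calc ∑ p, μ p * n p ≤ ∑ p, μ p * sSup S := by
          apply Finset.sum_le_sum
          intro p _
          rcases eq_or_ne (μ p) 0 with h | h
          · simp [h]
          · exact mul_le_mul_of_nonneg_left (le_csSup hba (hmem p h)) (hμ0 p)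
      _ = sSup S := by rw [← Finset.sum_mul, hμ1, one_mul]

/-- Example I bound for a triangle factor graph: the exact marginal `P` of variable `i`
lies between the extrema of normalized products `N(f·g)` where `f` ranges over the box
`B[lJ, uJ]` and `g` over the box `B[lK, uK]`. -/
theorem stmt_12 {Xi Xj Xk : Type*}
    [Fintype Xi] [Nonempty Xi] [Fintype Xj] [Nonempty Xj] [Fintype Xk] [Nonempty Xk]
    (ψJ : Xi × Xj → ℝ) (ψK : Xi × Xk → ℝ) (ψL : Xj × Xk → ℝ)
    (hψJ : ∀ z, 0 ≤ ψJ z) (hψK : ∀ z, 0 ≤ ψK z) (hψL : ∀ z, 0 ≤ ψL z)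
    (hJpos : ∀ xj, 0 < ∑ xi, ψJ (xi, xj))
    (hKpos : ∀ xk, 0 < ∑ xi, ψK (xi, xk))
    (hZpos : 0 < ∑ xi, ∑ xj, ∑ xk, ψJ (xi, xj) * ψK (xi, xk) * ψL (xj, xk))
    (lJ uJ : Xi → ℝ)
    (hlJ : ∀ x, lJ x = ⨅ xj, ψJ (x, xj) / ∑ x', ψJ (x', xj))
    (huJ : ∀ x, uJ x = ⨆ xj, ψJ (x, xj) / ∑ x', ψJ (x', xj))
    (lK uK : Xi → ℝ)
    (hlK : ∀ x, lK x = ⨅ xk, ψK (x, xk) / ∑ x', ψK (x', xk))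
    (huK : ∀ x, uK x = ⨆ xk, ψK (x, xk) / ∑ x', ψK (x', xk))
    (P : Xi → ℝ)
    (hP : ∀ xi, P xi = (∑ xj, ∑ xk, ψJ (xi, xj) * ψK (xi, xk) * ψL (xj, xk))
        / ∑ x, ∑ xj, ∑ xk, ψJ (x, xj) * ψK (x, xk) * ψL (xj, xk)) :
    ∀ xi : Xi,
      sInf {r : ℝ | ∃ f g : Xi → ℝ,
          (∀ x, lJ x ≤ f x ∧ f x ≤ uJ x) ∧
          (∀ x, lK x ≤ g x ∧ g x ≤ uK x) ∧
          (∃ x, f x * g x ≠ 0) ∧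
          r = f xi * g xi / ∑ x, f x * g x}
        ≤ P xi ∧
      P xi ≤ sSup {r : ℝ | ∃ f g : Xi → ℝ,
          (∀ x, lJ x ≤ f x ∧ f x ≤ uJ x) ∧
          (∀ x, lK x ≤ g x ∧ g x ≤ uK x) ∧
          (∃ x, f x * g x ≠ 0) ∧
          r = f xi * g xi / ∑ x, f x * g x} := by
  classical
  intro xi
  set S := {r : ℝ | ∃ f g : Xi → ℝ,
          (∀ x, lJ x ≤ f x ∧ f x ≤ uJ x) ∧
          (∀ x, lK x ≤ g x ∧ g x ≤ uK x) ∧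
          (∃ x, f x * g x ≠ 0) ∧
          r = f xi * g xi / ∑ x, f x * g x} with hSdef
  -- normalized messages
  set F : Xj → Xi → ℝ := fun xj x => ψJ (x, xj) / ∑ x', ψJ (x', xj) with hFdef
  set G : Xk → Xi → ℝ := fun xk x => ψK (x, xk) / ∑ x', ψK (x', xk) with hGdef
  have hF0 : ∀ xj x, 0 ≤ F xj x := fun xj x => div_nonneg (hψJ _) (hJpos _).le
  have hG0 : ∀ xk x, 0 ≤ G xk x := fun xk x => div_nonneg (hψK _) (hKpos _).le
  have hFbox : ∀ xj x, lJ x ≤ F xj x ∧ F xj x ≤ uJ x := by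
    intro xj x
    constructor
    · rw [hlJ x]; exact ciInf_le (f := fun xj => ψJ (x, xj) / ∑ x', ψJ (x', xj)) (Finite.bddBelow_range _) xj
    · rw [huJ x]; exact le_ciSup (f := fun xj => ψJ (x, xj) / ∑ x', ψJ (x', xj)) (Finite.bddAbove_range _) xj
  have hGbox : ∀ xk x, lK x ≤ G xk x ∧ G xk x ≤ uK x := by
    intro xk x
    constructor
    · rw [hlK x]; exact ciInf_le (f := fun xk => ψK (x, xk) / ∑ x', ψK (x', xk)) (Finite.bddBelow_range _) xk
    · rw [huK x]; exact le_ciSup (f := fun xk => ψK (x, xk) / ∑ x', ψK (x', xk)) (Finite.bddAbove_range _) xk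
  have hlJ0 : ∀ x, 0 ≤ lJ x := by
    intro x; rw [hlJ x]
    exact le_ciInf fun xj => div_nonneg (hψJ _) (hJpos _).le
  have hlK0 : ∀ x, 0 ≤ lK x := by
    intro x; rw [hlK x]
    exact le_ciInf fun xk => div_nonneg (hψK _) (hKpos _).le
  -- bounds on S
  have hlb : ∀ r ∈ S, (0:ℝ) ≤ r := by
    rintro r ⟨f, g, hf, hg, ⟨x0, hx0⟩, rfl⟩
    have hf0 : ∀ x, 0 ≤ f x := fun x => le_trans (hlJ0 x) (hf x).1
    have hg0 : ∀ x, 0 ≤ g x := fun x => le_trans (hlK0 x) (hg x).1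
    exact div_nonneg (mul_nonneg (hf0 xi) (hg0 xi))
      (Finset.sum_nonneg fun x _ => mul_nonneg (hf0 x) (hg0 x))
  have hub : ∀ r ∈ S, r ≤ 1 := by
    rintro r ⟨f, g, hf, hg, ⟨x0, hx0⟩, rfl⟩
    have hf0 : ∀ x, 0 ≤ f x := fun x => le_trans (hlJ0 x) (hf x).1
    have hg0 : ∀ x, 0 ≤ g x := fun x => le_trans (hlK0 x) (hg x).1
    have hterm0 : ∀ x, 0 ≤ f x * g x := fun x => mul_nonneg (hf0 x) (hg0 x)
    have hspos : 0 < ∑ x, f x * g x :=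
      Finset.sum_pos' (fun x _ => hterm0 x)
        ⟨x0, Finset.mem_univ x0, lt_of_le_of_ne (hterm0 x0) (Ne.symm hx0)⟩
    rw [div_le_one hspos]
    exact Finset.single_le_sum (fun x _ => hterm0 x) (Finset.mem_univ xi)
  -- weights and overlaps
  set s : Xj × Xk → ℝ := fun p => ∑ x, F p.1 x * G p.2 x with hsdef
  set w : Xj × Xk → ℝ := fun p =>
    (∑ x', ψJ (x', p.1)) * (∑ x', ψK (x', p.2)) * ψL p with hwdef
  have hw0 : ∀ p, 0 ≤ w p := fun p =>
    mul_nonneg (mul_nonneg (hJpos _).le (hKpos _).le) (hψL _)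
  have hs0 : ∀ p, 0 ≤ s p :=
    fun p => Finset.sum_nonneg fun x _ => mul_nonneg (hF0 _ _) (hG0 _ _)
  -- pointwise factorization
  have hkey : ∀ (x : Xi) (p : Xj × Xk),
      ψJ (x, p.1) * ψK (x, p.2) * ψL p = w p * (F p.1 x * G p.2 x) := by
    intro x p
    have h1 := (hJpos p.1).ne'
    have h2 := (hKpos p.2).ne'
    simp only [hFdef, hGdef, hwdef]
    field_simp
  have hA : ∀ x : Xi, (∑ xj, ∑ xk, ψJ (x, xj) * ψK (x, xk) * ψL (xj, xk))
      = ∑ p : Xj × Xk, w p * (F p.1 x * G p.2 x) := by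
    intro x
    rw [Fintype.sum_prod_type]
    exact Finset.sum_congr rfl fun xj _ => Finset.sum_congr rfl fun xk _ =>
      hkey x (xj, xk)
  set Z : ℝ := ∑ x, ∑ xj, ∑ xk, ψJ (x, xj) * ψK (x, xk) * ψL (xj, xk) with hZdef
  have hZ : Z = ∑ p : Xj × Xk, w p * s p := by
    rw [hZdef]
    rw [Finset.sum_congr rfl fun x _ => hA x, Finset.sum_comm]
    exact Finset.sum_congr rfl fun p _ => by rw [hsdef, Finset.mul_sum]
  have hZpos' : (0:ℝ) < Z := hZpos
  -- normalized product values
  set n : Xj × Xk → ℝ := fun p =>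
    if s p = 0 then 0 else F p.1 xi * G p.2 xi / s p with hndef
  have hterm : ∀ p : Xj × Xk,
      w p * (F p.1 xi * G p.2 xi) = (w p * s p) * n p := by
    intro p
    rcases eq_or_ne (s p) 0 with h | h
    · have hz : F p.1 xi * G p.2 xi = 0 := by
        have := (Finset.sum_eq_zero_iff_of_nonneg
          (fun x _ => mul_nonneg (hF0 p.1 x) (hG0 p.2 x))).mp h
        exact this xi (Finset.mem_univ xi)
      simp [hndef, h, hz]
    · simp only [hndef, if_neg h]
      field_simp
  have hmem : ∀ p : Xj × Xk, s p ≠ 0 → n p ∈ S := by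
    intro p hp
    have hex : ∃ x, F p.1 x * G p.2 x ≠ 0 := by
      by_contra hc
      push_neg at hc
      exact hp (by rw [hsdef]; exact Finset.sum_eq_zero fun x _ => hc x)
    refine ⟨F p.1, G p.2, fun x => hFbox p.1 x, fun x => hGbox p.2 x, hex, ?_⟩
    simp [hndef, if_neg hp, hsdef]
    intro h; exact absurd h (by simpa [hsdef] using hp)
  set μ : Xj × Xk → ℝ := fun p => w p * s p / Z with hμdef
  have hμ0 : ∀ p, 0 ≤ μ p := fun p =>
    div_nonneg (mul_nonneg (hw0 p) (hs0 p)) hZpos'.le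
  have hμ1 : ∑ p, μ p = 1 := by
    rw [hμdef]
    rw [← Finset.sum_div, ← hZ, div_self hZpos'.ne']
  have hmemμ : ∀ p, μ p ≠ 0 → n p ∈ S := by
    intro p hp
    apply hmem
    intro hsp
    exact hp (by simp [hμdef, hsp])
  have hPeq : P xi = ∑ p, μ p * n p := by
    rw [hP xi, hA xi, Finset.sum_congr rfl fun p _ => hterm p, Finset.sum_div]
    exact Finset.sum_congr rfl fun p _ => mul_div_right_comm _ _ _
  have hne : S.Nonempty := by
    have : ∃ p : Xj × Xk, w p * s p ≠ 0 := by
      by_contra hc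
      push_neg at hc
      rw [hZ] at hZpos'
      simp [Finset.sum_congr rfl fun p _ => hc p] at hZpos'
    obtain ⟨p, hp⟩ := this
    exact ⟨n p, hmem p fun h => hp (by rw [h, mul_zero])⟩
  rw [hPeq]
  exact aux_convex_bounds S hne hlb hub μ n hμ0 hμ1 hmemμ
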